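/- If E ⊆ ℝⁿ is α-thin at the point p for α ∈ (1, n], then there exists a ray emanating from p that avoids E within some small ball centered at p; i.e., there exist a unit vector v and r > 0 such that {p + tv : 0 < t < r} ∩ E = ∅. -/

import Mathlib

open MeasureTheory Metric Set Filter
open scoped ENNReal NNReal Topology

noncomputable section

/-- Euclidean n-space. -/
abbrev Euc (n : ℕ) := EuclideanSpace ℝ (Fin n)

/-- The Riesz potential `R^{α,Ω}_μ(x)`: for `α < n` it is `∫_Ω |x-y|^{α-n} dμ(y)`,
and for `α = n` (the remaining case `α ≤ n`) it is `∫_Ω log (D/|x-y|) dμ(y)`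
where `D = diam Ω`. -/
def rieszPotential (n : ℕ) (α : ℝ) (Ω : Set (Euc n)) (μ : Measure (Euc n)) (x : Euc n) :
    ℝ≥0∞ :=
  if α < n then ∫⁻ y in Ω, ENNReal.ofReal (‖x - y‖ ^ (α - (n : ℝ))) ∂μ
  else ∫⁻ y in Ω, ENNReal.ofReal (Real.log (Metric.diam Ω / ‖x - y‖)) ∂μ

/-- The Riesz capacity
`C^α_L(E,Ω) = inf { μ(Ω) : μ ≥ 0 a Radon measure on Ω, R^{α,Ω}_μ ≥ 1 on E }`. -/
def rieszCap (n : ℕ) (α : ℝ) (E Ω : Set (Euc n)) : ℝ≥0∞ :=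
  sInf {c | ∃ μ : Measure (Euc n),
    (∀ x ∈ E, 1 ≤ rieszPotential n α Ω μ x) ∧ c = μ Ω}

/-- The closed dyadic annulus `ω^δ_i(p) = {x : |x-p| ∈ [2^{-i} δ, 2^{-i+1} δ]}`. -/
def dyadicAnnulus (n : ℕ) (δ : ℝ) (i : ℕ) (p : Euc n) : Set (Euc n) :=
  {x | ‖x - p‖ ∈ Set.Icc ((2 : ℝ) ^ (-(i : ℤ)) * δ) ((2 : ℝ) ^ (-(i : ℤ) + 1) * δ)}

/-- The open dyadic annulus `Ω^δ_i(p) = {x : |x-p| ∈ (2^{-i-1} δ, 2^{-i+2} δ)}`. -/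
def dyadicAnnulusO (n : ℕ) (δ : ℝ) (i : ℕ) (p : Euc n) : Set (Euc n) :=
  {x | ‖x - p‖ ∈ Set.Ioo ((2 : ℝ) ^ (-(i : ℤ) - 1) * δ) ((2 : ℝ) ^ (-(i : ℤ) + 2) * δ)}

/-- `E` is `α`-thin at `p` with respect to the Riesz capacity: for `α ∈ (1, n)` this means
`Σ_{i≥1} C^α_L(E ∩ ω^δ_i(p), Ω^δ_i(p)) / C^α_L(∂B_{2^{-i}δ}(p), B_{2^{-i+1}δ}(p)) < ∞`
for some small `δ > 0`; for `α = n` it means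
`Σ_{i≥1} i · C^n_L(E ∩ ω^δ_i(p), Ω^δ_i(p)) < ∞` for some small `δ > 0`. -/
def RieszThinAt (n : ℕ) (α : ℝ) (E : Set (Euc n)) (p : Euc n) : Prop :=
  if α < n then
    ∃ δ > (0 : ℝ), ∑' i : ℕ,
      rieszCap n α (E ∩ dyadicAnnulus n δ (i + 1) p) (dyadicAnnulusO n δ (i + 1) p) /
        rieszCap n α (Metric.sphere p ((2 : ℝ) ^ (-(i : ℤ) - 1) * δ))
          (Metric.ball p ((2 : ℝ) ^ (-(i : ℤ)) * δ)) < ⊤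
  else
    ∃ δ > (0 : ℝ), ∑' i : ℕ,
      ((i + 1 : ℕ) : ℝ≥0∞) *
        rieszCap n n (E ∩ dyadicAnnulus n δ (i + 1) p) (dyadicAnnulusO n δ (i + 1) p) < ⊤

section AuxProof

open scoped RealInnerProductSpace

variable {n : ℕ}

/-- dyadic location helper -/
lemma exists_dyadic {u C : ℝ} (hC : 0 < C) (hu : 0 < u) (huC : u ≤ C) :
    ∃ k : ℕ, C * (2⁻¹ : ℝ) ^ (k + 1) < u ∧ u ≤ C * (2⁻¹ : ℝ) ^ k := by
  have h1 : (0 : ℝ) < u / C := div_pos hu hC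
  have h2 : (2⁻¹ : ℝ) < 1 := by norm_num
  obtain ⟨m, hm⟩ := exists_pow_lt_of_lt_one h1 h2
  have hex : ∃ m : ℕ, C * (2⁻¹ : ℝ) ^ m < u := by
    refine ⟨m, ?_⟩
    have h3 : (2⁻¹ : ℝ) ^ m * C < u := (lt_div_iff₀ hC).mp hm
    linarith
  classical
  set m0 := Nat.find hex with hm0
  have hm0lt : C * (2⁻¹ : ℝ) ^ m0 < u := Nat.find_spec hex
  have hm0ne : m0 ≠ 0 := by
    intro h0
    rw [h0] at hm0lt
    simp at hm0lt
    linarith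
  obtain ⟨k, hk⟩ : ∃ k, m0 = k + 1 := ⟨m0 - 1, by omega⟩
  refine ⟨k, by rw [← hk]; exact hm0lt, ?_⟩
  have := Nat.find_min hex (m := k) (by omega)
  push_neg at this
  exact this

/-- minimality of orthogonal projection onto a line -/
lemma dist_proj_le (x w : Euc n) (hw : ‖w‖ = 1) (t : ℝ) :
    ‖x - ⟪x, w⟫ • w‖ ≤ ‖x - t • w‖ := by
  have key : ∀ c : ℝ, ‖x - c • w‖ ^ 2 = ‖x‖ ^ 2 - 2 * c * ⟪x, w⟫ + c ^ 2 := by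
    intro c
    rw [norm_sub_sq_real, real_inner_smul_right, norm_smul, hw]
    simp [mul_pow]
    ring
  have h1 := key ⟪x, w⟫
  have h2 := key t
  have hsq : ‖x - ⟪x, w⟫ • w‖ ^ 2 ≤ ‖x - t • w‖ ^ 2 := by nlinarith [sq_nonneg (t - ⟪x, w⟫)]
  have := Real.sqrt_le_sqrt hsq
  rwa [Real.sqrt_sq (norm_nonneg _), Real.sqrt_sq (norm_nonneg _)] at this

/-- lower bound for distance between two rays -/
lemma smul_sub_smul_norm_ge (v w : Euc n) (hv : ‖v‖ = 1) (hw : ‖w‖ = 1) {s s' : ℝ}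
    (hs : 0 ≤ s) (hs' : 0 ≤ s') :
    Real.sqrt (s * s') * ‖v - w‖ ≤ ‖s • v - s' • w‖ := by
  have hvw : ‖v - w‖ ^ 2 = 2 - 2 * ⟪v, w⟫ := by
    rw [norm_sub_sq_real, hv, hw]; ring
  have h1 : ‖s • v - s' • w‖ ^ 2 = s ^ 2 - 2 * (s * s') * ⟪v, w⟫ + s' ^ 2 := by
    rw [norm_sub_sq_real, real_inner_smul_left, real_inner_smul_right, norm_smul, norm_smul,
      hv, hw]
    simp [abs_of_nonneg hs, abs_of_nonneg hs', mul_pow]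
    ring
  have hsq : (Real.sqrt (s * s') * ‖v - w‖) ^ 2 ≤ ‖s • v - s' • w‖ ^ 2 := by
    rw [mul_pow, Real.sq_sqrt (mul_nonneg hs hs'), hvw, h1]
    nlinarith [sq_nonneg (s - s')]
  have := Real.sqrt_le_sqrt hsq
  rwa [Real.sqrt_sq (by positivity), Real.sqrt_sq (norm_nonneg _)] at this

/-- volume of a tube around a line, intersected with the ball of radius 2 -/
lemma tube_vol (hn : 1 ≤ n) (w : Euc n) (hw : ‖w‖ = 1) {ρ : ℝ} (h0 : 0 < ρ) (h4 : ρ ≤ 4) :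
    volume {x : Euc n | ‖x‖ ≤ 2 ∧ ‖x - ⟪x, w⟫ • w‖ ≤ ρ}
      ≤ ENNReal.ofReal (ρ ^ (n - 1) * (8 * 4 ^ n)) * volume (ball (0 : Euc n) 1) := by
  classical
  set M : ℕ := ⌊(4 : ℝ) / ρ⌋₊ + 1 with hM
  have hcover : {x : Euc n | ‖x‖ ≤ 2 ∧ ‖x - ⟪x, w⟫ • w‖ ≤ ρ} ⊆
      ⋃ j ∈ Finset.range M, closedBall (((-2 : ℝ) + j * ρ) • w) (2 * ρ) := by
    rintro x ⟨hx2, hxd⟩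
    have hc : |⟪x, w⟫| ≤ 2 := by
      calc |⟪x, w⟫| ≤ ‖x‖ * ‖w‖ := abs_real_inner_le_norm x w
        _ ≤ 2 := by rw [hw]; linarith
    set c := ⟪x, w⟫ with hcdef
    have hc0 : (0 : ℝ) ≤ (c + 2) / ρ := by
      have h2c : -2 ≤ c := (abs_le.mp hc).1
      exact div_nonneg (by linarith) h0.le
    set j : ℕ := ⌊(c + 2) / ρ⌋₊ with hj
    have hjM : j < M := by
      have hle : (c + 2) / ρ ≤ 4 / ρ := by
        apply (div_le_div_iff_of_pos_right h0).mpr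
        linarith [(abs_le.mp hc).2]
      have := Nat.floor_mono hle
      omega
    have hjle : (j : ℝ) * ρ ≤ c + 2 := by
      have := Nat.floor_le hc0
      calc (j : ℝ) * ρ ≤ ((c + 2) / ρ) * ρ := by
            exact mul_le_mul_of_nonneg_right this h0.le
        _ = c + 2 := by field_simp
    have hjgt : c + 2 < (j + 1 : ℝ) * ρ := by
      have := Nat.lt_floor_add_one ((c + 2) / ρ)
      calc c + 2 = ((c + 2) / ρ) * ρ := by field_simp
        _ < (j + 1 : ℝ) * ρ := by
            exact mul_lt_mul_of_pos_right (by exact_mod_cast this) h0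
    simp only [mem_iUnion, Finset.mem_range]
    refine ⟨j, hjM, ?_⟩
    rw [mem_closedBall, dist_eq_norm]
    have hdec : x - ((-2 : ℝ) + j * ρ) • w = (x - c • w) + (c - ((-2 : ℝ) + j * ρ)) • w := by
      rw [sub_smul]; abel
    calc ‖x - ((-2 : ℝ) + j * ρ) • w‖
        ≤ ‖x - c • w‖ + ‖(c - ((-2 : ℝ) + j * ρ)) • w‖ := by rw [hdec]; exact norm_add_le _ _
      _ ≤ ρ + ρ := by
          gcongr
          rw [norm_smul, hw, mul_one, Real.norm_eq_abs, abs_le]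
          constructor <;> nlinarith
      _ = 2 * ρ := by ring
  calc volume {x : Euc n | ‖x‖ ≤ 2 ∧ ‖x - ⟪x, w⟫ • w‖ ≤ ρ}
      ≤ volume (⋃ j ∈ Finset.range M, closedBall (((-2 : ℝ) + j * ρ) • w) (2 * ρ)) :=
        measure_mono hcover
    _ ≤ ∑ j ∈ Finset.range M, volume (closedBall (((-2 : ℝ) + j * ρ) • w) (2 * ρ)) :=
        measure_biUnion_finset_le _ _
    _ = ∑ _j ∈ Finset.range M,
          (ENNReal.ofReal ((2 * ρ) ^ Module.finrank ℝ (Euc n)) * volume (ball (0 : Euc n) 1)) :=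
        Finset.sum_congr rfl fun j _ => Measure.addHaar_closedBall _ _ (by positivity)
    _ = M * (ENNReal.ofReal ((2 * ρ) ^ Module.finrank ℝ (Euc n)) * volume (ball (0 : Euc n) 1)) := by
        rw [Finset.sum_const, Finset.card_range, nsmul_eq_mul]
    _ ≤ ENNReal.ofReal (ρ ^ (n - 1) * (8 * 4 ^ n)) * volume (ball (0 : Euc n) 1) := by
        rw [finrank_euclideanSpace_fin]
        rw [← mul_assoc]
        gcongr ?_ * _
        have hMr : (M : ℝ) ≤ 8 / ρ := by
          have h1 : (⌊(4 : ℝ) / ρ⌋₊ : ℝ) ≤ 4 / ρ := Nat.floor_le (by positivity)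
          have h2 : (1 : ℝ) ≤ 4 / ρ := (one_le_div h0).mpr h4
          push_cast [hM]
          calc (⌊(4 : ℝ) / ρ⌋₊ : ℝ) + 1 ≤ 4 / ρ + 4 / ρ := by linarith
            _ = 8 / ρ := by ring
        calc (M : ℝ≥0∞) * ENNReal.ofReal ((2 * ρ) ^ n)
            = ENNReal.ofReal ((M : ℝ) * (2 * ρ) ^ n) := by
              rw [ENNReal.ofReal_mul (by positivity), ENNReal.ofReal_natCast]
          _ ≤ ENNReal.ofReal (ρ ^ (n - 1) * (8 * 4 ^ n)) := by
              apply ENNReal.ofReal_le_ofReal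
              have hpow : (2 * ρ) ^ n = 2 ^ n * ρ ^ n := by rw [mul_pow]
              have hn1 : ρ ^ n = ρ ^ (n - 1) * ρ := by
                rw [← pow_succ]
                congr 1
                omega
              have h2n : (2 : ℝ) ^ n ≤ 4 ^ n := by
                gcongr
                norm_num
              have hρpow : (0 : ℝ) < ρ ^ (n - 1) := by positivity
              calc (M : ℝ) * (2 * ρ) ^ n ≤ (8 / ρ) * (2 ^ n * ρ ^ n) := by
                    rw [hpow]
                    apply mul_le_mul_of_nonneg_right hMr (by positivity)
                _ = ρ ^ (n - 1) * (8 * 2 ^ n) := by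
                    rw [hn1]; field_simp
                _ ≤ ρ ^ (n - 1) * (8 * 4 ^ n) := by
                    gcongr

lemma ennreal_rpow_anti {a b : ℝ≥0∞} {e : ℝ} (he : e ≤ 0) (hab : a ≤ b) : b ^ e ≤ a ^ e := by
  have h1 : a ^ e = (a ^ (-e))⁻¹ := by rw [← ENNReal.rpow_neg, neg_neg]
  have h2 : b ^ e = (b ^ (-e))⁻¹ := by rw [← ENNReal.rpow_neg, neg_neg]
  rw [h1, h2]
  exact ENNReal.inv_le_inv.mpr (ENNReal.rpow_le_rpow hab (neg_nonneg.mpr he))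

lemma core_int (hn : 2 ≤ n) {e : ℝ} (he : -((n : ℝ) - 1) < e) (he0 : e < 0) :
    ∃ K : ℝ≥0∞, K ≠ ⊤ ∧ ∀ w : Euc n, ‖w‖ = 1 →
      ∫⁻ x in {x : Euc n | ‖x‖ ≤ 2}, (ENNReal.ofReal ‖x - ⟪x, w⟫ • w‖) ^ e ∂volume ≤ K := by
  have hn1 : (1 : ℝ) ≤ (n : ℝ) - 1 := by
    have : (2 : ℝ) ≤ (n : ℝ) := by exact_mod_cast hn
    linarith
  set q : ℝ := e + ((n : ℝ) - 1) with hq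
  have hq0 : 0 < q := by simp only [hq]; linarith
  set V : ℝ≥0∞ := volume (ball (0 : Euc n) 1) with hV
  have hVtop : V ≠ ⊤ := measure_ball_lt_top.ne
  set A : ℝ := 4 ^ (n - 1) * (8 * 4 ^ n) with hA
  set r0 : ℝ≥0∞ := ENNReal.ofReal ((2 : ℝ)⁻¹ ^ q) with hr0
  have hr0lt : r0 < 1 := by
    rw [hr0, ← ENNReal.ofReal_one]
    apply ENNReal.ofReal_lt_ofReal_iff (by norm_num) |>.mpr
    exact Real.rpow_lt_one (by norm_num) (by norm_num) hq0
  refine ⟨ENNReal.ofReal A * (1 - r0)⁻¹ * V, ?_, ?_⟩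
  · apply ENNReal.mul_ne_top (ENNReal.mul_ne_top ENNReal.ofReal_ne_top ?_) hVtop
    exact ENNReal.inv_ne_top.mpr (tsub_pos_of_lt hr0lt).ne'
  intro w hw
  set d : Euc n → ℝ := fun x => ‖x - ⟪x, w⟫ • w‖ with hd
  have hd2 : ∀ x : Euc n, ‖x‖ ≤ 2 → d x ≤ 2 := by
    intro x hx
    calc d x ≤ ‖x - (0 : ℝ) • w‖ := dist_proj_le x w hw 0
      _ = ‖x‖ := by rw [zero_smul, sub_zero]
      _ ≤ 2 := hx
  set S : ℕ → Set (Euc n) :=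
    fun k => {x | ‖x‖ ≤ 2 ∧ 4 * (2⁻¹ : ℝ) ^ (k + 1) < d x ∧ d x ≤ 4 * (2⁻¹ : ℝ) ^ k} with hS
  set Z : Set (Euc n) := {x | ‖x‖ ≤ 2 ∧ d x ≤ 0} with hZdef
  have hsub : {x : Euc n | ‖x‖ ≤ 2} ⊆ Z ∪ ⋃ k, S k := by
    intro x hx
    rcases le_or_gt (d x) 0 with h | h
    · exact Or.inl ⟨hx, h⟩
    · obtain ⟨k, hk1, hk2⟩ := exists_dyadic (by norm_num : (0:ℝ) < 4) h
        (by linarith [hd2 x hx])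
      exact Or.inr (mem_iUnion.mpr ⟨k, hx, hk1, hk2⟩)
  have htube : ∀ ρ : ℝ, 0 < ρ → ρ ≤ 4 →
      volume {x : Euc n | ‖x‖ ≤ 2 ∧ d x ≤ ρ}
        ≤ ENNReal.ofReal (ρ ^ (n - 1) * (8 * 4 ^ n)) * V :=
    fun ρ h0 h4 => tube_vol (by omega) w hw h0 h4
  have hZ : volume Z = 0 := by
    have hbound : ∀ m : ℕ, volume Z ≤
        ENNReal.ofReal ((4 * (2⁻¹ : ℝ) ^ m) ^ (n - 1) * (8 * 4 ^ n)) * V := by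
      intro m
      refine le_trans (measure_mono ?_) (htube _ (by positivity) ?_)
      · rintro x ⟨hx1, hx2⟩
        exact ⟨hx1, hx2.trans (by positivity)⟩
      · have hp1 : (2⁻¹ : ℝ) ^ m ≤ 1 := pow_le_one₀ (by norm_num) (by norm_num)
        linarith
    have htend : Tendsto
        (fun m : ℕ => ENNReal.ofReal ((4 * (2⁻¹ : ℝ) ^ m) ^ (n - 1) * (8 * 4 ^ n)) * V)
        atTop (𝓝 (0 * V)) := by
      apply ENNReal.Tendsto.mul_const ?_ (Or.inr hVtop)
      rw [show (0 : ℝ≥0∞) = ENNReal.ofReal 0 by simp]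
      apply ENNReal.tendsto_ofReal
      have h1 : Tendsto (fun m : ℕ => (4 * (2⁻¹ : ℝ) ^ m)) atTop (𝓝 0) := by
        rw [show (0 : ℝ) = 4 * 0 by ring]
        exact (tendsto_pow_atTop_nhds_zero_of_lt_one (by norm_num) (by norm_num)).const_mul 4
      have h2 : Tendsto (fun m : ℕ => (4 * (2⁻¹ : ℝ) ^ m) ^ (n - 1) * (8 * 4 ^ n))
          atTop (𝓝 (0 ^ (n - 1) * (8 * 4 ^ n))) := by
        exact ((h1.pow (n - 1)).mul_const _)
      rw [zero_pow (by omega), zero_mul] at h2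
      exact h2
    rw [zero_mul] at htend
    exact le_antisymm (ge_of_tendsto' htend hbound) (zero_le)
  calc ∫⁻ x in {x : Euc n | ‖x‖ ≤ 2}, (ENNReal.ofReal (d x)) ^ e ∂volume
      ≤ ∫⁻ x in Z ∪ ⋃ k, S k, (ENNReal.ofReal (d x)) ^ e ∂volume :=
        lintegral_mono_set hsub
    _ ≤ (∫⁻ x in Z, (ENNReal.ofReal (d x)) ^ e ∂volume)
        + ∫⁻ x in ⋃ k, S k, (ENNReal.ofReal (d x)) ^ e ∂volume := lintegral_union_le _ _ _
    _ = ∫⁻ x in ⋃ k, S k, (ENNReal.ofReal (d x)) ^ e ∂volume := by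
        rw [setLIntegral_measure_zero _ _ hZ, zero_add]
    _ ≤ ∑' k, ∫⁻ x in S k, (ENNReal.ofReal (d x)) ^ e ∂volume := lintegral_iUnion_le _ _
    _ ≤ ∑' k, ENNReal.ofReal A * r0 ^ k * V := by
        apply ENNReal.tsum_le_tsum
        intro k
        have hstep1 : ∫⁻ x in S k, (ENNReal.ofReal (d x)) ^ e ∂volume
            ≤ (ENNReal.ofReal (4 * (2⁻¹ : ℝ) ^ (k + 1))) ^ e * volume (S k) := by
          rw [← setLIntegral_const]
          apply setLIntegral_mono measurable_const
          rintro x ⟨_, hx2, _⟩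
          exact ennreal_rpow_anti he0.le (ENNReal.ofReal_le_ofReal hx2.le)
        have hstep2 : volume (S k)
            ≤ ENNReal.ofReal ((4 * (2⁻¹ : ℝ) ^ k) ^ (n - 1) * (8 * 4 ^ n)) * V := by
          refine le_trans (measure_mono ?_) (htube _ (by positivity) ?_)
          · rintro x ⟨hx1, _, hx3⟩; exact ⟨hx1, hx3⟩
          · have hp1 : (2⁻¹ : ℝ) ^ k ≤ 1 := pow_le_one₀ (by norm_num) (by norm_num)
            linarith
        set c : ℝ := (2⁻¹ : ℝ) ^ k with hc
        have hc0 : 0 < c := by positivity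
        have hkey : (ENNReal.ofReal (4 * (2⁻¹ : ℝ) ^ (k + 1))) ^ e
              * ENNReal.ofReal ((4 * (2⁻¹ : ℝ) ^ k) ^ (n - 1) * (8 * 4 ^ n))
            ≤ ENNReal.ofReal A * r0 ^ k := by
          have h2c : 4 * (2⁻¹ : ℝ) ^ (k + 1) = 2 * c := by
            rw [pow_succ, hc]; ring
          rw [h2c, ENNReal.ofReal_rpow_of_pos (by linarith), ← ENNReal.ofReal_mul (by positivity),
            hr0, ← ENNReal.ofReal_pow (by positivity), ← ENNReal.ofReal_mul (by positivity)]
          apply ENNReal.ofReal_le_ofReal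
          have h1 : (2 * c) ^ e ≤ c ^ e :=
            Real.rpow_le_rpow_of_nonpos hc0 (by linarith) he0.le
          have h2 : (4 * c) ^ (n - 1) = 4 ^ (n - 1) * c ^ (n - 1) := mul_pow _ _ _
          have h3 : c ^ e * (c : ℝ) ^ (n - 1) = c ^ q := by
            rw [← Real.rpow_natCast c (n - 1), ← Real.rpow_add hc0, hq]
            congr 1
            have : ((n - 1 : ℕ) : ℝ) = (n : ℝ) - 1 := by
              push_cast [Nat.cast_sub (by omega : 1 ≤ n)]
              ring
            rw [this]
          have h4 : c ^ q = ((2⁻¹ : ℝ) ^ q) ^ k := by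
            rw [hc, ← Real.rpow_natCast (2⁻¹ : ℝ) k, ← Real.rpow_mul (by norm_num), mul_comm,
              Real.rpow_mul (by norm_num), Real.rpow_natCast]
          calc (2 * c) ^ e * ((4 * c) ^ (n - 1) * (8 * 4 ^ n))
              ≤ c ^ e * ((4 * c) ^ (n - 1) * (8 * 4 ^ n)) := by
                apply mul_le_mul_of_nonneg_right h1 (by positivity)
            _ = (c ^ e * c ^ (n - 1)) * (4 ^ (n - 1) * (8 * 4 ^ n)) := by rw [h2]; ring
            _ = A * ((2⁻¹ : ℝ) ^ q) ^ k := by rw [h3, h4, hA]; ring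
        calc ∫⁻ x in S k, (ENNReal.ofReal (d x)) ^ e ∂volume
            ≤ (ENNReal.ofReal (4 * (2⁻¹ : ℝ) ^ (k + 1))) ^ e
              * (ENNReal.ofReal ((4 * (2⁻¹ : ℝ) ^ k) ^ (n - 1) * (8 * 4 ^ n)) * V) := by
              exact hstep1.trans (mul_le_mul_right hstep2 _)
          _ = ((ENNReal.ofReal (4 * (2⁻¹ : ℝ) ^ (k + 1))) ^ e
              * ENNReal.ofReal ((4 * (2⁻¹ : ℝ) ^ k) ^ (n - 1) * (8 * 4 ^ n))) * V := by
              rw [mul_assoc]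
          _ ≤ ENNReal.ofReal A * r0 ^ k * V := mul_le_mul_left hkey _
    _ = ENNReal.ofReal A * (1 - r0)⁻¹ * V := by
        rw [ENNReal.tsum_mul_right, ENNReal.tsum_mul_left, ENNReal.tsum_geometric]

lemma vol_bad_le (hn : 2 ≤ n) (p : Euc n) (E : Set (Euc n)) {r : ℝ} (hr : 0 < r)
    {Ω : Set (Euc n)} (hΩmeas : MeasurableSet Ω)
    (hΩ : ∀ y ∈ Ω, r / 2 < ‖y - p‖ ∧ ‖y - p‖ < 4 * r)
    (μ : Measure (Euc n)) (hμ : μ Ω ≠ ⊤)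
    (F : Euc n → Euc n → ℝ≥0∞)
    (hF : ∀ s ∈ Icc r (2 * r), ∀ v : Euc n, ‖v‖ = 1 → p + s • v ∈ E →
      1 ≤ ∫⁻ y in Ω, F (p + s • v) y ∂μ)
    {C : ℝ≥0∞} (hC0 : C ≠ 0) (hCtop : C ≠ ⊤) {e : ℝ} (he0 : e < 0)
    (hdom : ∀ x' y : Euc n, ∀ d : ℝ, 0 ≤ d → r / 4 * d ≤ ‖x' - y‖ →
      F x' y ≤ C * (ENNReal.ofReal d) ^ e)
    {K : ℝ≥0∞} (hK : ∀ w : Euc n, ‖w‖ = 1 →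
      ∫⁻ x in {x : Euc n | ‖x‖ ≤ 2}, (ENNReal.ofReal ‖x - ⟪x, w⟫ • w‖) ^ e ∂volume ≤ K) :
    volume {x : Euc n | ‖x‖ ∈ Ioo (1:ℝ) 2 ∧ ∃ s ∈ Icc r (2*r), p + s • (‖x‖⁻¹ • x) ∈ E}
      ≤ C * K * μ Ω := by
  classical
  set wf : Euc n → Euc n := fun y => ‖y - p‖⁻¹ • (y - p) with hwf
  set h : Euc n → Euc n → ℝ≥0∞ :=
    fun x y => C * (ENNReal.ofReal ‖x - ⟪x, wf y⟫ • wf y‖) ^ e with hh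
  have mwf : Measurable wf := by
    have m1 : Measurable fun y : Euc n => y - p := (continuous_id.sub continuous_const).measurable
    exact (m1.norm.inv).smul m1
  have mh : Measurable (Function.uncurry h) := by
    have m1 : Measurable fun z : Euc n × Euc n => wf z.2 := mwf.comp measurable_snd
    have m2 : Measurable fun z : Euc n × Euc n => (⟪z.1, wf z.2⟫ : ℝ) := measurable_fst.inner m1
    have m3 : Measurable fun z : Euc n × Euc n => z.1 - (⟪z.1, wf z.2⟫ : ℝ) • wf z.2 :=
      measurable_fst.sub (m2.smul m1)
    exact (((m3.norm).ennreal_ofReal).pow_const e).const_mul C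
  set ν : Measure (Euc n) := μ.restrict Ω with hν
  haveI : IsFiniteMeasure ν := by
    constructor
    rw [hν, Measure.restrict_apply_univ]
    exact lt_top_iff_ne_top.mpr hμ
  set H : Euc n → ℝ≥0∞ := fun x => ∫⁻ y, h x y ∂ν with hH
  have mH : Measurable H := Measurable.lintegral_prod_right mh
  have hwn : ∀ y ∈ Ω, ‖wf y‖ = 1 := by
    intro y hy
    have hy0 : (0:ℝ) < ‖y - p‖ := lt_trans (by positivity) (hΩ y hy).1
    rw [hwf]
    simp only [norm_smul, norm_inv, norm_norm]
    exact inv_mul_cancel₀ hy0.ne'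
  have hkey : ∀ x : Euc n, ‖x‖ ∈ Ioo (1:ℝ) 2 →
      (∃ s ∈ Icc r (2*r), p + s • (‖x‖⁻¹ • x) ∈ E) → 1 ≤ H x := by
    rintro x hx ⟨s, hs, hsE⟩
    have hx0 : (0:ℝ) < ‖x‖ := lt_trans one_pos hx.1
    set v : Euc n := ‖x‖⁻¹ • x with hv
    have hvnorm : ‖v‖ = 1 := by
      rw [hv, norm_smul, norm_inv, norm_norm]
      exact inv_mul_cancel₀ hx0.ne'
    have h1 : 1 ≤ ∫⁻ y in Ω, F (p + s • v) y ∂μ := hF s hs v hvnorm hsE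
    refine h1.trans ?_
    have hmono : ∫⁻ y in Ω, F (p + s • v) y ∂μ ≤ ∫⁻ y in Ω, h x y ∂μ := by
      apply setLIntegral_mono (mh.comp measurable_prodMk_left)
      intro y hy
      obtain ⟨hy1, hy2⟩ := hΩ y hy
      have hy0 : (0:ℝ) < ‖y - p‖ := lt_trans (by positivity) hy1
      set w : Euc n := wf y with hw
      have hwn1 : ‖w‖ = 1 := hwn y hy
      set d : ℝ := ‖x - ⟪x, w⟫ • w‖ with hdd
      have hyw : ‖y - p‖ • w = y - p := by
        rw [hw, hwf]
        exact smul_inv_smul₀ hy0.ne' _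
      have hxy : p + s • v - y = s • v - ‖y - p‖ • w := by
        rw [hyw]; abel
      -- distance chain
      have hA1 : Real.sqrt (s * ‖y - p‖) * ‖v - w‖ ≤ ‖s • v - ‖y - p‖ • w‖ :=
        smul_sub_smul_norm_ge v w hvnorm hwn1 (le_trans hr.le hs.1) hy0.le
      have hsqrt : r / 2 ≤ Real.sqrt (s * ‖y - p‖) := by
        rw [Real.le_sqrt (by positivity) (mul_nonneg (hr.le.trans hs.1) hy0.le)]
        nlinarith [hs.1, hy1, hr]
      have hvw : (1/2) * d ≤ ‖v - w‖ := by
        have hvwe : v - w = ‖x‖⁻¹ • (x - ‖x‖ • w) := by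
          rw [smul_sub, hv, smul_smul, inv_mul_cancel₀ hx0.ne', one_smul]
        have hnn : ‖v - w‖ = ‖x‖⁻¹ * ‖x - ‖x‖ • w‖ := by
          rw [hvwe, norm_smul, norm_inv, norm_norm]
        have hd1 : d ≤ ‖x - ‖x‖ • w‖ := dist_proj_le x w hwn1 _
        have hinv : (1/2 : ℝ) ≤ ‖x‖⁻¹ := by
          rw [show (1/2 : ℝ) = 2⁻¹ by norm_num]
          exact inv_anti₀ hx0 hx.2.le
        calc (1/2) * d ≤ ‖x‖⁻¹ * ‖x - ‖x‖ • w‖ := by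
              apply mul_le_mul hinv hd1 (by positivity) (by positivity)
          _ = ‖v - w‖ := hnn.symm
      have hchain : r / 4 * d ≤ ‖p + s • v - y‖ := by
        rw [hxy]
        calc r / 4 * d = (r/2) * ((1/2) * d) := by ring
          _ ≤ (r/2) * ‖v - w‖ := by
              apply mul_le_mul_of_nonneg_left hvw (by positivity)
          _ ≤ Real.sqrt (s * ‖y - p‖) * ‖v - w‖ := by
              apply mul_le_mul_of_nonneg_right hsqrt (norm_nonneg _)
          _ ≤ ‖s • v - ‖y - p‖ • w‖ := hA1
      exact hdom _ y d (norm_nonneg _) hchain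
    exact hmono
  have hB2meas : MeasurableSet {x : Euc n | ‖x‖ ≤ 2} :=
    (isClosed_le continuous_norm continuous_const).measurableSet
  calc volume {x : Euc n | ‖x‖ ∈ Ioo (1:ℝ) 2 ∧ ∃ s ∈ Icc r (2*r), p + s • (‖x‖⁻¹ • x) ∈ E}
      ≤ volume ({x : Euc n | 1 ≤ H x} ∩ {x : Euc n | ‖x‖ ≤ 2}) := by
        apply measure_mono
        rintro x ⟨hx1, hx2⟩
        exact ⟨hkey x hx1 hx2, hx1.2.le⟩
    _ = (volume.restrict {x : Euc n | ‖x‖ ≤ 2}) {x : Euc n | 1 ≤ H x} :=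
        (Measure.restrict_apply' hB2meas).symm
    _ ≤ ∫⁻ x, H x ∂(volume.restrict {x : Euc n | ‖x‖ ≤ 2}) := by
        have := mul_meas_ge_le_lintegral₀ (μ := volume.restrict {x : Euc n | ‖x‖ ≤ 2})
          mH.aemeasurable 1
        simpa using this
    _ = ∫⁻ y, ∫⁻ x in {x : Euc n | ‖x‖ ≤ 2}, h x y ∂volume ∂ν :=
        lintegral_lintegral_swap mh.aemeasurable
    _ ≤ ∫⁻ _y, C * K ∂ν := by
        apply lintegral_mono_ae
        filter_upwards [ae_restrict_mem hΩmeas] with y hy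
        calc ∫⁻ x in {x : Euc n | ‖x‖ ≤ 2}, h x y ∂volume
            = C * ∫⁻ x in {x : Euc n | ‖x‖ ≤ 2},
                (ENNReal.ofReal ‖x - ⟪x, wf y⟫ • wf y‖) ^ e ∂volume :=
              lintegral_const_mul' C _ hCtop
          _ ≤ C * K := mul_le_mul_right (hK (wf y) (hwn y hy)) C
    _ = C * K * μ Ω := by
        rw [lintegral_const, hν, Measure.restrict_apply_univ]





/-- Dirac upper bound for the capacity of a sphere inside a ball. -/
lemma rieszCap_sphere_le {α : ℝ} (hαn : α < n) {r' R : ℝ} (hr' : 0 < r') (hR : 0 < R)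
    (p : Euc n) :
    rieszCap n α (sphere p r') (ball p R) ≤ ENNReal.ofReal (r' ^ ((n : ℝ) - α)) := by
  classical
  apply sInf_le
  refine ⟨(ENNReal.ofReal (r' ^ ((n : ℝ) - α))) • Measure.dirac p, ?_, ?_⟩
  · intro x hx
    rw [rieszPotential, if_pos hαn]
    have hmeas : Measurable fun y : Euc n => ENNReal.ofReal (‖x - y‖ ^ (α - (n : ℝ))) := by
      have m1 : Measurable fun y : Euc n => ‖x - y‖ :=
        (continuous_const.sub continuous_id).norm.measurable
      exact (m1.pow_const _).ennreal_ofReal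
    rw [Measure.restrict_smul, lintegral_smul_measure,
      restrict_dirac' measurableSet_ball, if_pos (mem_ball_self hR), lintegral_dirac' _ hmeas]
    have hxp : ‖x - p‖ = r' := by
      rw [← dist_eq_norm]
      exact mem_sphere.mp hx
    rw [hxp, smul_eq_mul, ← ENNReal.ofReal_mul (by positivity), ← Real.rpow_add hr']
    norm_num
  · rw [Measure.smul_apply, smul_eq_mul, Measure.dirac_apply' _ measurableSet_ball,
      indicator_of_mem (mem_ball_self hR), Pi.one_apply, mul_one]

/-- From summability of the volumes of the bad direction sets, produce an escaping ray. -/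
lemma escape_of_bad_summable (hn : 2 ≤ n) {δ : ℝ} (hδ : 0 < δ) (p : Euc n) (E : Set (Euc n))
    (h : ∑' i : ℕ, volume {x : Euc n | ‖x‖ ∈ Ioo (1:ℝ) 2 ∧
        ∃ s ∈ Icc ((2:ℝ) ^ (-(i:ℤ) - 1) * δ) (2 * ((2:ℝ) ^ (-(i:ℤ) - 1) * δ)),
          p + s • (‖x‖⁻¹ • x) ∈ E} ≠ ⊤) :
    ∃ v : Euc n, ‖v‖ = 1 ∧ ∃ r > (0 : ℝ), ∀ t ∈ Set.Ioo (0 : ℝ) r, p + t • v ∉ E := by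
  classical
  set Bad : ℕ → Set (Euc n) := fun i => {x : Euc n | ‖x‖ ∈ Ioo (1:ℝ) 2 ∧
    ∃ s ∈ Icc ((2:ℝ) ^ (-(i:ℤ) - 1) * δ) (2 * ((2:ℝ) ^ (-(i:ℤ) - 1) * δ)),
      p + s • (‖x‖⁻¹ • x) ∈ E} with hBad
  set A : Set (Euc n) := {x : Euc n | ‖x‖ ∈ Ioo (1:ℝ) 2} with hA
  have hAopen : IsOpen A := by
    have : A = (fun x : Euc n => ‖x‖) ⁻¹' (Ioo 1 2) := rfl
    rw [this]
    exact isOpen_Ioo.preimage continuous_norm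
  have hAne : A.Nonempty := by
    have hn0 : 0 < n := by omega
    refine ⟨(3/2 : ℝ) • EuclideanSpace.single (⟨0, hn0⟩ : Fin n) (1:ℝ), ?_⟩
    simp only [hA, mem_setOf_eq, norm_smul, EuclideanSpace.norm_single]
    norm_num
  have hApos : 0 < volume A := IsOpen.measure_pos hAopen (μ := (volume : Measure (Euc n))) hAne
  have htail : Tendsto (fun N => ∑' k, volume (Bad (k + N))) atTop (𝓝 0) :=
    ENNReal.tendsto_sum_nat_add _ h
  obtain ⟨N, hN⟩ : ∃ N, ∑' k, volume (Bad (k + N)) < volume A := by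
    have := htail.eventually_lt_const hApos
    exact this.exists
  have hx0 : ∃ x₀ ∈ A, ∀ k, x₀ ∉ Bad (k + N) := by
    by_contra hcon
    push_neg at hcon
    have hsub : A ⊆ ⋃ k, Bad (k + N) := by
      intro x hx
      obtain ⟨k, hk⟩ := hcon x hx
      exact mem_iUnion.mpr ⟨k, hk⟩
    have h2 : volume A ≤ ∑' k, volume (Bad (k + N)) :=
      (measure_mono hsub).trans (measure_iUnion_le (μ := (volume : Measure (Euc n)))
        fun k => Bad (k + N))
    exact absurd (h2.trans_lt hN) (lt_irrefl _)
  obtain ⟨x₀, hx₀A, hx₀⟩ := hx0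
  have hx₀n : (0:ℝ) < ‖x₀‖ := lt_trans one_pos hx₀A.1
  refine ⟨‖x₀‖⁻¹ • x₀, ?_, (2:ℝ) ^ (-(N:ℤ) - 1) * δ, by positivity, ?_⟩
  · rw [norm_smul, norm_inv, norm_norm]
    exact inv_mul_cancel₀ hx₀n.ne'
  intro t ht htE
  obtain ⟨k, hk1, hk2⟩ := exists_dyadic (by positivity : (0:ℝ) < (2:ℝ) ^ (-(N:ℤ) - 1) * δ)
    ht.1 ht.2.le
  -- t ∈ Icc (R (k+1+N)) (2 * R (k+1+N)) where R m = 2^(-m-1) δ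
  have hRid : ∀ m k : ℕ, (2:ℝ) ^ (-(m:ℤ) - 1) * δ * (2⁻¹:ℝ) ^ k
      = (2:ℝ) ^ (-((k + m : ℕ) : ℤ) - 1) * δ := by
    intro m k
    have e1 : ((2:ℝ)⁻¹) ^ k = (2:ℝ) ^ (-(k:ℤ)) := by
      rw [inv_pow, ← zpow_natCast (2:ℝ) k, ← zpow_neg]
    calc (2:ℝ) ^ (-(m:ℤ) - 1) * δ * (2⁻¹:ℝ) ^ k
        = ((2:ℝ) ^ (-(m:ℤ) - 1) * (2:ℝ) ^ (-(k:ℤ))) * δ := by rw [e1]; ring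
      _ = (2:ℝ) ^ ((-(m:ℤ) - 1) + -(k:ℤ)) * δ := by
          rw [zpow_add₀ (by norm_num : (2:ℝ) ≠ 0)]
      _ = (2:ℝ) ^ (-((k + m : ℕ) : ℤ) - 1) * δ := by
          congr 1
          congr 1
          push_cast
          ring
  have hkA : t ≤ (2:ℝ) ^ (-((k + N : ℕ) : ℤ) - 1) * δ := by
    rw [← hRid N k]; exact hk2
  have hkB : (2:ℝ) ^ (-(((k + 1) + N : ℕ)) - 1 : ℤ) * δ < t := by
    have := hRid N (k + 1)
    have h2 : ((k + 1) + N : ℕ) = ((k + 1) + N : ℕ) := rfl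
    calc (2:ℝ) ^ (-(((k + 1) + N : ℕ)) - 1 : ℤ) * δ
        = (2:ℝ) ^ (-(N:ℤ) - 1) * δ * (2⁻¹:ℝ) ^ (k + 1) := by
          rw [hRid N (k+1)]
      _ < t := hk1
  have hupper : t ≤ 2 * ((2:ℝ) ^ (-(((k + 1) + N : ℕ) : ℤ) - 1) * δ) := by
    have e2 : 2 * ((2:ℝ) ^ (-(((k + 1) + N : ℕ) : ℤ) - 1) * δ)
        = (2:ℝ) ^ (-((k + N : ℕ) : ℤ) - 1) * δ := by
      rw [show (-(((k + 1) + N : ℕ) : ℤ) - 1) = (-((k + N : ℕ) : ℤ) - 1) + (-1) by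
        push_cast; ring]
      rw [zpow_add₀ (by norm_num : (2:ℝ) ≠ 0), zpow_neg_one]
      ring
    rw [e2]
    exact hkA
  exact hx₀ (k + 1) ⟨hx₀A, t, ⟨hkB.le, hupper⟩, htE⟩

theorem ray_escaping_thin_set' (n : ℕ) (α : ℝ) (hα₁ : 1 < α) (hα₂ : α ≤ n)
    (E : Set (Euc n)) (p : Euc n)
    (hthin : if α < n then
      ∃ δ > (0 : ℝ), ∑' i : ℕ,
        rieszCap n α (E ∩ dyadicAnnulus n δ (i + 1) p) (dyadicAnnulusO n δ (i + 1) p) /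
          rieszCap n α (Metric.sphere p ((2 : ℝ) ^ (-(i : ℤ) - 1) * δ))
            (Metric.ball p ((2 : ℝ) ^ (-(i : ℤ)) * δ)) < ⊤
    else
      ∃ δ > (0 : ℝ), ∑' i : ℕ,
        ((i + 1 : ℕ) : ℝ≥0∞) *
          rieszCap n n (E ∩ dyadicAnnulus n δ (i + 1) p) (dyadicAnnulusO n δ (i + 1) p) < ⊤) :
    ∃ v : Euc n, ‖v‖ = 1 ∧ ∃ r > (0 : ℝ), ∀ t ∈ Set.Ioo (0 : ℝ) r, p + t • v ∉ E := by
  classical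
  have hn2 : 2 ≤ n := by
    have h1 : (1 : ℝ) < (n : ℝ) := lt_of_lt_of_le hα₁ hα₂
    exact_mod_cast Nat.succ_le_of_lt (by exact_mod_cast h1)
  by_cases hαlt : α < n
  · -- case α < n
    rw [if_pos hαlt] at hthin
    obtain ⟨δ, hδ, hsum⟩ := hthin
    set rr : ℕ → ℝ := fun i => (2 : ℝ) ^ (-(i : ℤ) - 1) * δ with hrr
    have hrpos : ∀ i, 0 < rr i := fun i => by positivity
    -- annulus facts
    have hω : ∀ i, ∀ s ∈ Icc (rr i) (2 * rr i), ∀ v : Euc n, ‖v‖ = 1 →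
        p + s • v ∈ dyadicAnnulus n δ (i + 1) p := by
      intro i s hs v hv
      have hs0 : 0 < s := lt_of_lt_of_le (hrpos i) hs.1
      have hnorm : ‖p + s • v - p‖ = s := by
        rw [add_sub_cancel_left, norm_smul, hv, mul_one, Real.norm_eq_abs, abs_of_pos hs0]
      have e1 : (2 : ℝ) ^ (-((i + 1 : ℕ) : ℤ)) * δ = rr i := by
        rw [hrr]
        congr 2
        push_cast
        ring
      have e2 : (2 : ℝ) ^ (-((i + 1 : ℕ) : ℤ) + 1) * δ = 2 * rr i := by
        rw [hrr, show (-((i + 1 : ℕ) : ℤ) + 1) = (-(i : ℤ) - 1) + 1 by push_cast; ring,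
          zpow_add₀ (by norm_num : (2:ℝ) ≠ 0), zpow_one]
        ring
      rw [dyadicAnnulus]
      simp only [mem_setOf_eq, hnorm, e1, e2]
      exact hs
    have hΩ : ∀ i, ∀ y ∈ dyadicAnnulusO n δ (i + 1) p,
        rr i / 2 < ‖y - p‖ ∧ ‖y - p‖ < 4 * rr i := by
      intro i y hy
      rw [dyadicAnnulusO, mem_setOf_eq] at hy
      have e1 : (2 : ℝ) ^ (-((i + 1 : ℕ) : ℤ) - 1) * δ = rr i / 2 := by
        rw [hrr, show (-((i + 1 : ℕ) : ℤ) - 1) = (-(i : ℤ) - 1) + (-1) by push_cast; ring,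
          zpow_add₀ (by norm_num : (2:ℝ) ≠ 0), zpow_neg_one]
        ring
      have e2 : (2 : ℝ) ^ (-((i + 1 : ℕ) : ℤ) + 2) * δ = 4 * rr i := by
        rw [hrr, show (-((i + 1 : ℕ) : ℤ) + 2) = (-(i : ℤ) - 1) + 2 by push_cast; ring,
          zpow_add₀ (by norm_num : (2:ℝ) ≠ 0)]
        norm_num
        ring
      rw [e1, e2] at hy
      exact hy
    have hΩmeas : ∀ i, MeasurableSet (dyadicAnnulusO n δ (i + 1) p) := by
      intro i
      have : dyadicAnnulusO n δ (i + 1) p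
          = (fun y : Euc n => ‖y - p‖) ⁻¹' (Ioo ((2 : ℝ) ^ (-((i+1:ℕ) : ℤ) - 1) * δ)
            ((2 : ℝ) ^ (-((i+1:ℕ) : ℤ) + 2) * δ)) := rfl
      rw [this]
      exact (isOpen_Ioo.preimage ((continuous_id.sub continuous_const).norm)).measurableSet
    -- capacities
    set num : ℕ → ℝ≥0∞ := fun i =>
      rieszCap n α (E ∩ dyadicAnnulus n δ (i + 1) p) (dyadicAnnulusO n δ (i + 1) p) with hnum
    set den : ℕ → ℝ≥0∞ := fun i =>
      rieszCap n α (Metric.sphere p ((2 : ℝ) ^ (-(i : ℤ) - 1) * δ))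
        (Metric.ball p ((2 : ℝ) ^ (-(i : ℤ)) * δ)) with hden'
    set D : ℕ → ℝ≥0∞ := fun i => ENNReal.ofReal ((rr i) ^ ((n : ℝ) - α)) with hD
    have hdenle : ∀ i, den i ≤ D i := fun i =>
      rieszCap_sphere_le hαlt (hrpos i) (by positivity) p
    have hDtop : ∀ i, D i ≠ ⊤ := fun i => ENNReal.ofReal_ne_top
    have hD0 : ∀ i, D i ≠ 0 := fun i => (ENNReal.ofReal_pos.mpr (by positivity)).ne'
    have hterm : ∀ i, num i / den i < ⊤ :=
      fun i => lt_of_le_of_lt (ENNReal.le_tsum i) hsum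
    have hnumtop : ∀ i, num i ≠ ⊤ := by
      intro i hc
      have hdentop : den i ≠ ⊤ := fun h => (hDtop i) (top_le_iff.mp (h ▸ hdenle i))
      have : num i / den i = ⊤ := ENNReal.div_eq_top.mpr (Or.inr ⟨hc, hdentop⟩)
      exact (hterm i).ne this
    set geo : ℕ → ℝ≥0∞ := fun i => (ENNReal.ofReal 2⁻¹) ^ i with hgeo
    have hgeo0 : ∀ i, geo i ≠ 0 := fun i =>
      pow_ne_zero i (ENNReal.ofReal_pos.mpr (by norm_num)).ne'
    have hgeotop : ∀ i, geo i ≠ ⊤ := fun i => ENNReal.pow_ne_top ENNReal.ofReal_ne_top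
    -- core integral
    have he0 : α - (n : ℝ) < 0 := by linarith
    have he : -((n : ℝ) - 1) < α - (n : ℝ) := by linarith
    obtain ⟨K, hKtop, hK⟩ := core_int hn2 he he0
    set C4 : ℝ≥0∞ := ENNReal.ofReal ((4 : ℝ) ^ ((n : ℝ) - α)) with hC4
    -- per-index bound
    have hbad : ∀ i, volume {x : Euc n | ‖x‖ ∈ Ioo (1:ℝ) 2 ∧
        ∃ s ∈ Icc (rr i) (2 * rr i), p + s • (‖x‖⁻¹ • x) ∈ E}
        ≤ K * (C4 * (num i / den i + geo i)) := by
      intro i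
      -- extract a near-optimal measure
      have hlt : num i < num i + geo i * D i :=
        ENNReal.lt_add_right (hnumtop i) (mul_ne_zero (hgeo0 i) (hD0 i))
      have hsinf : rieszCap n α (E ∩ dyadicAnnulus n δ (i + 1) p)
          (dyadicAnnulusO n δ (i + 1) p) < num i + geo i * D i := hlt
      rw [rieszCap] at hsinf
      obtain ⟨c, ⟨μ, hadm, hcμ⟩, hclt⟩ := sInf_lt_iff.mp hsinf
      have hfin : num i + geo i * D i < ⊤ :=
        ENNReal.add_lt_top.mpr ⟨(hnumtop i).lt_top,
          ENNReal.mul_lt_top (hgeotop i).lt_top (hDtop i).lt_top⟩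
      have hμtop : μ (dyadicAnnulusO n δ (i + 1) p) ≠ ⊤ := by
        have hcne : c ≠ ⊤ := (hclt.trans hfin).ne
        rwa [hcμ] at hcne
      -- apply the main estimate
      have hF : ∀ s ∈ Icc (rr i) (2 * rr i), ∀ v : Euc n, ‖v‖ = 1 → p + s • v ∈ E →
          1 ≤ ∫⁻ y in dyadicAnnulusO n δ (i + 1) p,
            ENNReal.ofReal (‖(p + s • v) - y‖ ^ (α - (n : ℝ))) ∂μ := by
        intro s hs v hv hE'
        have hmem : p + s • v ∈ E ∩ dyadicAnnulus n δ (i + 1) p :=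
          ⟨hE', hω i s hs v hv⟩
        have := hadm _ hmem
        rwa [rieszPotential, if_pos hαlt] at this
      set Ci : ℝ≥0∞ := ENNReal.ofReal ((rr i / 4) ^ (α - (n : ℝ))) with hCi
      have hCi0 : Ci ≠ 0 := (ENNReal.ofReal_pos.mpr (by positivity)).ne'
      have hCitop : Ci ≠ ⊤ := ENNReal.ofReal_ne_top
      have hdom : ∀ x' y : Euc n, ∀ d : ℝ, 0 ≤ d → rr i / 4 * d ≤ ‖x' - y‖ →
          ENNReal.ofReal (‖x' - y‖ ^ (α - (n : ℝ))) ≤ Ci * (ENNReal.ofReal d) ^ (α - (n : ℝ)) := by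
        intro x' y d hd hdist
        rcases eq_or_lt_of_le hd with hd0 | hd0
        · rw [← hd0]
          simp only [ENNReal.ofReal_zero, ENNReal.zero_rpow_of_neg he0]
          rw [ENNReal.mul_top hCi0]
          exact le_top
        · have hq0 : (0:ℝ) < rr i / 4 * d := by positivity
          have hxy0 : (0:ℝ) < ‖x' - y‖ := lt_of_lt_of_le hq0 hdist
          calc ENNReal.ofReal (‖x' - y‖ ^ (α - (n : ℝ)))
              ≤ ENNReal.ofReal ((rr i / 4 * d) ^ (α - (n : ℝ))) :=
                ENNReal.ofReal_le_ofReal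
                  (Real.rpow_le_rpow_of_nonpos hq0 hdist he0.le)
            _ = Ci * (ENNReal.ofReal d) ^ (α - (n : ℝ)) := by
                rw [Real.mul_rpow (by positivity) hd0.le, ENNReal.ofReal_mul (by positivity),
                  hCi, ENNReal.ofReal_rpow_of_pos hd0]
      have hmain := vol_bad_le hn2 p E (hrpos i) (hΩmeas i) (hΩ i) μ hμtop _ hF hCi0 hCitop
        he0 hdom hK
      -- arithmetic
      have hCD : Ci * D i = C4 := by
        rw [hCi, hD, hC4, ← ENNReal.ofReal_mul (by positivity)]
        congr 1
        rw [Real.div_rpow (hrpos i).le (by norm_num), div_mul_eq_mul_div,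
          ← Real.rpow_add (hrpos i), show α - (n:ℝ) + ((n:ℝ) - α) = 0 by ring, Real.rpow_zero,
          one_div, ← Real.rpow_neg (by norm_num : (0:ℝ) ≤ 4), neg_sub]
      have hnumle : num i ≤ num i / den i * D i := by
        have hdiv : num i / D i ≤ num i / den i := ENNReal.div_le_div_left (hdenle i) _
        calc num i = num i / D i * D i := (ENNReal.div_mul_cancel (hD0 i) (hDtop i)).symm
          _ ≤ num i / den i * D i := mul_le_mul_left hdiv _
      calc volume {x : Euc n | ‖x‖ ∈ Ioo (1:ℝ) 2 ∧
            ∃ s ∈ Icc (rr i) (2 * rr i), p + s • (‖x‖⁻¹ • x) ∈ E}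
          ≤ Ci * K * μ (dyadicAnnulusO n δ (i + 1) p) := hmain
        _ ≤ Ci * K * (num i + geo i * D i) := by
            apply mul_le_mul_right
            have := hclt.le
            rw [hcμ] at this
            exact this
        _ ≤ Ci * K * (num i / den i * D i + geo i * D i) := by
            apply mul_le_mul_right
            exact add_le_add hnumle le_rfl
        _ = K * ((Ci * D i) * (num i / den i + geo i)) := by ring
        _ = K * (C4 * (num i / den i + geo i)) := by rw [hCD]
    -- sum up
    have hsumfin : ∑' i, volume {x : Euc n | ‖x‖ ∈ Ioo (1:ℝ) 2 ∧
        ∃ s ∈ Icc (rr i) (2 * rr i), p + s • (‖x‖⁻¹ • x) ∈ E} ≠ ⊤ := by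
      have h1 : ∑' i, volume {x : Euc n | ‖x‖ ∈ Ioo (1:ℝ) 2 ∧
          ∃ s ∈ Icc (rr i) (2 * rr i), p + s • (‖x‖⁻¹ • x) ∈ E}
          ≤ ∑' i, K * (C4 * (num i / den i + geo i)) := ENNReal.tsum_le_tsum hbad
      have h2 : ∑' i, K * (C4 * (num i / den i + geo i))
          = K * C4 * ((∑' i, num i / den i) + ∑' i, geo i) := by
        rw [ENNReal.tsum_mul_left]
        rw [ENNReal.tsum_mul_left]
        rw [ENNReal.tsum_add]
        ring
      have hgeosum : ∑' i, geo i < ⊤ := by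
        rw [hgeo, ENNReal.tsum_geometric]
        exact ENNReal.inv_lt_top.mpr (tsub_pos_of_lt (by
          rw [← ENNReal.ofReal_one]
          exact ENNReal.ofReal_lt_ofReal_iff (by norm_num) |>.mpr (by norm_num)))
      apply ne_top_of_le_ne_top ?_ (h1.trans_eq h2)
      exact (ENNReal.mul_lt_top
        (ENNReal.mul_lt_top hKtop.lt_top ENNReal.ofReal_lt_top)
        (ENNReal.add_lt_top.mpr ⟨hsum, hgeosum⟩)).ne
    exact escape_of_bad_summable hn2 hδ p E hsumfin
  · -- case α = n
    have heq : α = (n : ℝ) := le_antisymm hα₂ (not_lt.mp hαlt)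
    subst heq
    rw [if_neg hαlt] at hthin
    obtain ⟨δ, hδ, hsum⟩ := hthin
    set rr : ℕ → ℝ := fun i => (2 : ℝ) ^ (-(i : ℤ) - 1) * δ with hrr
    have hrpos : ∀ i, 0 < rr i := fun i => by positivity
    have hω : ∀ i, ∀ s ∈ Icc (rr i) (2 * rr i), ∀ v : Euc n, ‖v‖ = 1 →
        p + s • v ∈ dyadicAnnulus n δ (i + 1) p := by
      intro i s hs v hv
      have hs0 : 0 < s := lt_of_lt_of_le (hrpos i) hs.1
      have hnorm : ‖p + s • v - p‖ = s := by
        rw [add_sub_cancel_left, norm_smul, hv, mul_one, Real.norm_eq_abs, abs_of_pos hs0]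
      have e1 : (2 : ℝ) ^ (-((i + 1 : ℕ) : ℤ)) * δ = rr i := by
        rw [hrr]
        congr 2
        push_cast
        ring
      have e2 : (2 : ℝ) ^ (-((i + 1 : ℕ) : ℤ) + 1) * δ = 2 * rr i := by
        rw [hrr, show (-((i + 1 : ℕ) : ℤ) + 1) = (-(i : ℤ) - 1) + 1 by push_cast; ring,
          zpow_add₀ (by norm_num : (2:ℝ) ≠ 0), zpow_one]
        ring
      rw [dyadicAnnulus]
      simp only [mem_setOf_eq, hnorm, e1, e2]
      exact hs
    have hΩ : ∀ i, ∀ y ∈ dyadicAnnulusO n δ (i + 1) p,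
        rr i / 2 < ‖y - p‖ ∧ ‖y - p‖ < 4 * rr i := by
      intro i y hy
      rw [dyadicAnnulusO, mem_setOf_eq] at hy
      have e1 : (2 : ℝ) ^ (-((i + 1 : ℕ) : ℤ) - 1) * δ = rr i / 2 := by
        rw [hrr, show (-((i + 1 : ℕ) : ℤ) - 1) = (-(i : ℤ) - 1) + (-1) by push_cast; ring,
          zpow_add₀ (by norm_num : (2:ℝ) ≠ 0), zpow_neg_one]
        ring
      have e2 : (2 : ℝ) ^ (-((i + 1 : ℕ) : ℤ) + 2) * δ = 4 * rr i := by
        rw [hrr, show (-((i + 1 : ℕ) : ℤ) + 2) = (-(i : ℤ) - 1) + 2 by push_cast; ring,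
          zpow_add₀ (by norm_num : (2:ℝ) ≠ 0)]
        norm_num
        ring
      rw [e1, e2] at hy
      exact hy
    have hΩmeas : ∀ i, MeasurableSet (dyadicAnnulusO n δ (i + 1) p) := by
      intro i
      have : dyadicAnnulusO n δ (i + 1) p
          = (fun y : Euc n => ‖y - p‖) ⁻¹' (Ioo ((2 : ℝ) ^ (-((i+1:ℕ) : ℤ) - 1) * δ)
            ((2 : ℝ) ^ (-((i+1:ℕ) : ℤ) + 2) * δ)) := rfl
      rw [this]
      exact (isOpen_Ioo.preimage ((continuous_id.sub continuous_const).norm)).measurableSet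
    have hdiam : ∀ i, Metric.diam (dyadicAnnulusO n δ (i + 1) p) ≤ 8 * rr i := by
      intro i
      have hsub : dyadicAnnulusO n δ (i + 1) p ⊆ ball p (4 * rr i) := by
        intro y hy
        rw [mem_ball, dist_eq_norm]
        exact (hΩ i y hy).2
      calc Metric.diam (dyadicAnnulusO n δ (i + 1) p) ≤ Metric.diam (ball p (4 * rr i)) :=
            Metric.diam_mono hsub isBounded_ball
        _ ≤ 2 * (4 * rr i) := diam_ball (by positivity)
        _ = 8 * rr i := by ring
    set num : ℕ → ℝ≥0∞ := fun i =>
      rieszCap n n (E ∩ dyadicAnnulus n δ (i + 1) p) (dyadicAnnulusO n δ (i + 1) p) with hnum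
    have hterm : ∀ i, ((i + 1 : ℕ) : ℝ≥0∞) * num i < ⊤ :=
      fun i => lt_of_le_of_lt (ENNReal.le_tsum i) hsum
    have hnumle : ∀ i, num i ≤ ((i + 1 : ℕ) : ℝ≥0∞) * num i := fun i =>
      le_mul_of_one_le_left (zero_le) (by exact_mod_cast Nat.one_le_iff_ne_zero.mpr (by omega))
    have hnumtop : ∀ i, num i ≠ ⊤ := fun i => ((hnumle i).trans_lt (hterm i)).ne
    set geo : ℕ → ℝ≥0∞ := fun i => (ENNReal.ofReal 2⁻¹) ^ i with hgeo
    have hgeo0 : ∀ i, geo i ≠ 0 := fun i =>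
      pow_ne_zero i (ENNReal.ofReal_pos.mpr (by norm_num)).ne'
    have hgeotop : ∀ i, geo i ≠ ⊤ := fun _ => ENNReal.pow_ne_top ENNReal.ofReal_ne_top
    have he0 : -(1/2 : ℝ) < 0 := by norm_num
    have he : -((n : ℝ) - 1) < -(1/2 : ℝ) := by
      have h1 : (2 : ℝ) ≤ (n : ℝ) := by exact_mod_cast hn2
      linarith
    obtain ⟨K, hKtop, hK⟩ := core_int hn2 he he0
    set C : ℝ≥0∞ := ENNReal.ofReal (2 * Real.sqrt 32) with hC
    have hC0 : C ≠ 0 := by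
      rw [hC]
      exact (ENNReal.ofReal_pos.mpr (by positivity)).ne'
    have hCtop : C ≠ ⊤ := ENNReal.ofReal_ne_top
    have hbad : ∀ i, volume {x : Euc n | ‖x‖ ∈ Ioo (1:ℝ) 2 ∧
        ∃ s ∈ Icc (rr i) (2 * rr i), p + s • (‖x‖⁻¹ • x) ∈ E}
        ≤ C * K * (num i + geo i) := by
      intro i
      have hlt : num i < num i + geo i := ENNReal.lt_add_right (hnumtop i) (hgeo0 i)
      have hsinf : rieszCap n n (E ∩ dyadicAnnulus n δ (i + 1) p)
          (dyadicAnnulusO n δ (i + 1) p) < num i + geo i := hlt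
      rw [rieszCap] at hsinf
      obtain ⟨c, ⟨μ, hadm, hcμ⟩, hclt⟩ := sInf_lt_iff.mp hsinf
      have hfin : num i + geo i < ⊤ :=
        ENNReal.add_lt_top.mpr ⟨(hnumtop i).lt_top, (hgeotop i).lt_top⟩
      have hμtop : μ (dyadicAnnulusO n δ (i + 1) p) ≠ ⊤ := by
        have hcne : c ≠ ⊤ := (hclt.trans hfin).ne
        rwa [hcμ] at hcne
      have hF : ∀ s ∈ Icc (rr i) (2 * rr i), ∀ v : Euc n, ‖v‖ = 1 → p + s • v ∈ E →
          1 ≤ ∫⁻ y in dyadicAnnulusO n δ (i + 1) p,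
            ENNReal.ofReal (Real.log
              (Metric.diam (dyadicAnnulusO n δ (i + 1) p) / ‖(p + s • v) - y‖)) ∂μ := by
        intro s hs v hv hE'
        have hmem : p + s • v ∈ E ∩ dyadicAnnulus n δ (i + 1) p :=
          ⟨hE', hω i s hs v hv⟩
        have := hadm _ hmem
        rwa [rieszPotential, if_neg (lt_irrefl _)] at this
      have hdom : ∀ x' y : Euc n, ∀ d : ℝ, 0 ≤ d → rr i / 4 * d ≤ ‖x' - y‖ →
          ENNReal.ofReal (Real.log
              (Metric.diam (dyadicAnnulusO n δ (i + 1) p) / ‖x' - y‖))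
            ≤ C * (ENNReal.ofReal d) ^ (-(1/2 : ℝ)) := by
        intro x' y d hd hdist
        rcases eq_or_lt_of_le hd with hd0 | hd0
        · rw [← hd0]
          simp only [ENNReal.ofReal_zero, ENNReal.zero_rpow_of_neg he0]
          rw [ENNReal.mul_top hC0]
          exact le_top
        · have hq0 : (0:ℝ) < rr i / 4 * d := by positivity
          have hxy0 : (0:ℝ) < ‖x' - y‖ := lt_of_lt_of_le hq0 hdist
          set Dm : ℝ := Metric.diam (dyadicAnnulusO n δ (i + 1) p) with hDm
          have hDm0 : 0 ≤ Dm := Metric.diam_nonneg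
          have hq32 : Dm / ‖x' - y‖ ≤ 32 / d := by
            calc Dm / ‖x' - y‖ ≤ (8 * rr i) / (rr i / 4 * d) :=
                  div_le_div₀ (by positivity) (hdiam i) hq0 hdist
              _ = 32 / d := by
                  rw [div_mul_eq_div_div]
                  rw [div_div_eq_mul_div, mul_comm, mul_div_assoc]
                  congr 1
                  field_simp [(hrpos i).ne']
                  ring
          have hrhs : ENNReal.ofReal (Real.log (32 / d))
              ≤ C * (ENNReal.ofReal d) ^ (-(1/2 : ℝ)) := by
            have hu0 : (0:ℝ) < 32 / d := by positivity
            have hlog : Real.log (32 / d) ≤ 2 * Real.sqrt (32 / d) := by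
              have h1 : Real.log (Real.sqrt (32 / d)) = Real.log (32 / d) / 2 :=
                Real.log_sqrt hu0.le
              have h2 : Real.log (Real.sqrt (32 / d)) ≤ Real.sqrt (32 / d) - 1 :=
                Real.log_le_sub_one_of_pos (Real.sqrt_pos.mpr hu0)
              nlinarith [Real.sqrt_nonneg (32 / d)]
            have hsq : Real.sqrt (32 / d) = Real.sqrt 32 / Real.sqrt d :=
              Real.sqrt_div (by norm_num) d
            have hrp : ENNReal.ofReal ((Real.sqrt d)⁻¹)
                = (ENNReal.ofReal d) ^ (-(1/2 : ℝ)) := by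
              have hinv : (Real.sqrt d)⁻¹ = d ^ (-(1/2 : ℝ)) := by
                rw [Real.rpow_neg hd, ← Real.sqrt_eq_rpow]
              rw [hinv, ENNReal.ofReal_rpow_of_pos hd0]
            calc ENNReal.ofReal (Real.log (32 / d))
                ≤ ENNReal.ofReal (2 * Real.sqrt (32 / d)) := ENNReal.ofReal_le_ofReal hlog
              _ = ENNReal.ofReal ((2 * Real.sqrt 32) * (Real.sqrt d)⁻¹) := by
                  rw [hsq]
                  ring_nf
              _ = C * ENNReal.ofReal ((Real.sqrt d)⁻¹) := by
                  rw [ENNReal.ofReal_mul (by positivity), hC]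
              _ = C * (ENNReal.ofReal d) ^ (-(1/2 : ℝ)) := by rw [hrp]
          rcases le_or_gt (Dm / ‖x' - y‖) 0 with hz | hz
          · have hzero : Dm / ‖x' - y‖ = 0 := le_antisymm hz (by positivity)
            rw [hzero, Real.log_zero, ENNReal.ofReal_zero]
            exact zero_le
          · calc ENNReal.ofReal (Real.log (Dm / ‖x' - y‖))
                ≤ ENNReal.ofReal (Real.log (32 / d)) :=
                  ENNReal.ofReal_le_ofReal (Real.log_le_log hz hq32)
              _ ≤ C * (ENNReal.ofReal d) ^ (-(1/2 : ℝ)) := hrhs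
      have hmain := vol_bad_le hn2 p E (hrpos i) (hΩmeas i) (hΩ i) μ hμtop _ hF hC0 hCtop
        he0 hdom hK
      calc volume {x : Euc n | ‖x‖ ∈ Ioo (1:ℝ) 2 ∧
            ∃ s ∈ Icc (rr i) (2 * rr i), p + s • (‖x‖⁻¹ • x) ∈ E}
          ≤ C * K * μ (dyadicAnnulusO n δ (i + 1) p) := hmain
        _ ≤ C * K * (num i + geo i) := by
            apply mul_le_mul_right
            have := hclt.le
            rw [hcμ] at this
            exact this
    have hsumfin : ∑' i, volume {x : Euc n | ‖x‖ ∈ Ioo (1:ℝ) 2 ∧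
        ∃ s ∈ Icc (rr i) (2 * rr i), p + s • (‖x‖⁻¹ • x) ∈ E} ≠ ⊤ := by
      have h1 : ∑' i, volume {x : Euc n | ‖x‖ ∈ Ioo (1:ℝ) 2 ∧
          ∃ s ∈ Icc (rr i) (2 * rr i), p + s • (‖x‖⁻¹ • x) ∈ E}
          ≤ ∑' i, C * K * (num i + geo i) := ENNReal.tsum_le_tsum hbad
      have h2 : ∑' i, C * K * (num i + geo i)
          = C * K * ((∑' i, num i) + ∑' i, geo i) := by
        rw [ENNReal.tsum_mul_left, ENNReal.tsum_add]
      have hnumsum : ∑' i, num i < ⊤ :=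
        lt_of_le_of_lt (ENNReal.tsum_le_tsum hnumle) hsum
      have hgeosum : ∑' i, geo i < ⊤ := by
        rw [hgeo, ENNReal.tsum_geometric]
        exact ENNReal.inv_lt_top.mpr (tsub_pos_of_lt (by
          rw [← ENNReal.ofReal_one]
          exact ENNReal.ofReal_lt_ofReal_iff (by norm_num) |>.mpr (by norm_num)))
      apply ne_top_of_le_ne_top ?_ (h1.trans_eq h2)
      exact (ENNReal.mul_lt_top
        (ENNReal.mul_lt_top hCtop.lt_top hKtop.lt_top)
        (ENNReal.add_lt_top.mpr ⟨hnumsum, hgeosum⟩)).ne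
    exact escape_of_bad_summable hn2 hδ p E hsumfin

end AuxProof

/-- if `E ⊆ ℝⁿ` is `α`-thin at `p` for `α ∈ (1, n]`, then some ray from
`p` avoids `E` within a small ball at `p`: there are a unit vector `v` and `r > 0`
with `p + t v ∉ E` for all `t ∈ (0, r)`. -/
theorem ray_escaping_thin_set (n : ℕ) (α : ℝ) (hα₁ : 1 < α) (hα₂ : α ≤ n)
    (E : Set (Euc n)) (p : Euc n) (hthin : RieszThinAt n α E p) :
    ∃ v : Euc n, ‖v‖ = 1 ∧ ∃ r > (0 : ℝ), ∀ t ∈ Set.Ioo (0 : ℝ) r, p + t • v ∉ E := by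
  exact ray_escaping_thin_set' n α hα₁ hα₂ E p (by rw [RieszThinAt] at hthin; exact hthin)
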